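/- Let G = G_l ⊗ G_r be a true twin composition, assume D_k(H) ≠ ∅ for each H ∈ {G, G_l, G_r} and each 0 ≤ k ≤ |TS(H)|, and assume Equation (2) holds for G_l and for G_r. Then α(G) = α(G_l) − β(G_r) if α(G_l) > β(G_r); α(G) = α(G_r) − β(G_l) if α(G_r) > β(G_l); and otherwise α(G) = |α(G_l) − α(G_r)| mod 2. -/
import Mathlib


/-- A finite simple graph on a subset of an ambient vertex type `α`,
together with a designated twin set `TS ⊆ verts`. -/
structure TSGraph (α : Type*) where
  verts : Finset α
  Adj : α → α → Prop
  symm : ∀ u v, Adj u v → Adj v u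
  irrefl : ∀ u, ¬ Adj u u
  adj_mem : ∀ u v, Adj u v → u ∈ verts ∧ v ∈ verts
  TS : Finset α
  TS_sub : TS ⊆ verts

namespace TSGraph

variable {α : Type*} [DecidableEq α]

/-- `f` encodes a perfect matching of the subgraph of `G` induced by `S`:
every vertex of `S` is paired with an adjacent vertex of `S`, involutively. -/
def IsPM (G : TSGraph α) (S : Finset α) (f : α → α) : Prop :=
  ∀ v ∈ S, f v ∈ S ∧ G.Adj v (f v) ∧ f (f v) = v

/-- `S ⊆ V(G)` dominates `V(G) − TS(G)` and, for some `X ⊆ S ∩ TS(G)` of size `k`,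
the subgraph induced by `S − X` has a perfect matching. -/
def Adm (G : TSGraph α) (k : ℕ) (S : Finset α) : Prop :=
  S ⊆ G.verts ∧
  (∀ v ∈ G.verts, v ∉ G.TS → v ∈ S ∨ ∃ u ∈ S, G.Adj u v) ∧
  ∃ X ⊆ S ∩ G.TS, X.card = k ∧ ∃ f, G.IsPM (S \ X) f

/-- Membership in the family `D_k(G)`: admissible of minimum cardinality. -/
def memD (G : TSGraph α) (k : ℕ) (S : Finset α) : Prop :=
  G.Adm k S ∧ ∀ S', G.Adm k S' → S.card ≤ S'.card

/-- `D_k(G) ≠ ∅`. -/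
def DkNonempty (G : TSGraph α) (k : ℕ) : Prop := ∃ S, G.memD k S

/-- `D_k(G) ≠ ∅` for all `0 ≤ k ≤ |TS(G)|`. -/
def AllDkNonempty (G : TSGraph α) : Prop := ∀ k ≤ G.TS.card, G.DkNonempty k

/-- `γ_k(G)`: the common cardinality of the members of `D_k(G)`. -/
noncomputable def gamma (G : TSGraph α) (k : ℕ) : ℕ :=
  sInf {n | ∃ S, G.Adm k S ∧ S.card = n}

/-- A paired-dominating set of `G`. -/
def IsPDS (G : TSGraph α) (D : Finset α) : Prop :=
  D ⊆ G.verts ∧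
  (∀ v ∈ G.verts, v ∈ D ∨ ∃ u ∈ D, G.Adj u v) ∧
  ∃ f, G.IsPM D f

/-- `γ_p(G)`: the paired-domination number. -/
noncomputable def gammaP (G : TSGraph α) : ℕ :=
  sInf {n | ∃ D, G.IsPDS D ∧ D.card = n}

/-- Membership in `D_p(G)`: minimum-cardinality paired-dominating sets. -/
def memDp (G : TSGraph α) (D : Finset α) : Prop :=
  G.IsPDS D ∧ D.card = G.gammaP

/-- `min(G) = min { γ_k(G) : 0 ≤ k ≤ |TS(G)| }`. -/
noncomputable def minVal (G : TSGraph α) : ℕ :=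
  sInf {n | ∃ k ≤ G.TS.card, G.gamma k = n}

/-- `α(G)`: the smallest `k` with `γ_k(G) = min(G)`. -/
noncomputable def alphaVal (G : TSGraph α) : ℕ :=
  sInf {k | k ≤ G.TS.card ∧ G.gamma k = G.minVal}

/-- `β(G)`: the largest `k` with `γ_k(G) = min(G)`. -/
noncomputable def betaVal (G : TSGraph α) : ℕ :=
  sSup {k | k ≤ G.TS.card ∧ G.gamma k = G.minVal}

/-- Membership in `Ψ(G)`: sets in some `D_k(G)` of cardinality `min(G)`. -/
def memPsi (G : TSGraph α) (D : Finset α) : Prop :=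
  (∃ k, k ≤ G.TS.card ∧ G.memD k D) ∧ D.card = G.minVal

/-- Equation (2) holds for `G`. -/
def Eq2Holds (G : TSGraph α) : Prop :=
  ∀ k ≤ G.TS.card,
    (k ≤ G.alphaVal → G.gamma k = G.minVal + G.alphaVal - k) ∧
    (G.betaVal ≤ k → G.gamma k = G.minVal + k - G.betaVal) ∧
    (G.alphaVal < k → k < G.betaVal → Even (k - G.alphaVal) → G.gamma k = G.minVal) ∧
    (G.alphaVal < k → k < G.betaVal → ¬ Even (k - G.alphaVal) → G.gamma k = G.minVal + 1)

/-- `G = Gl ⊗ Gr` (true twin composition). -/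
def IsTrueTwin (G Gl Gr : TSGraph α) : Prop :=
  Disjoint Gl.verts Gr.verts ∧
  G.verts = Gl.verts ∪ Gr.verts ∧
  (∀ u v, G.Adj u v ↔ Gl.Adj u v ∨ Gr.Adj u v ∨
    (u ∈ Gl.TS ∧ v ∈ Gr.TS) ∨ (u ∈ Gr.TS ∧ v ∈ Gl.TS)) ∧
  G.TS = Gl.TS ∪ Gr.TS

/-- `G = Gl ⊙ Gr` (false twin composition). -/
def IsFalseTwin (G Gl Gr : TSGraph α) : Prop :=
  Disjoint Gl.verts Gr.verts ∧
  G.verts = Gl.verts ∪ Gr.verts ∧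
  (∀ u v, G.Adj u v ↔ Gl.Adj u v ∨ Gr.Adj u v) ∧
  G.TS = Gl.TS ∪ Gr.TS

/-- `G = Gl ⊕ Gr` (attachment composition). -/
def IsAttach (G Gl Gr : TSGraph α) : Prop :=
  Disjoint Gl.verts Gr.verts ∧
  G.verts = Gl.verts ∪ Gr.verts ∧
  (∀ u v, G.Adj u v ↔ Gl.Adj u v ∨ Gr.Adj u v ∨
    (u ∈ Gl.TS ∧ v ∈ Gr.TS) ∨ (u ∈ Gr.TS ∧ v ∈ Gl.TS)) ∧
  G.TS = Gl.TS

/-- The twin-set graph `G` arises from a decomposition tree all of whose associated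
twin-set graphs satisfy the property `P`. -/
inductive FromDecompTree (P : TSGraph α → Prop) : TSGraph α → Prop where
  | single (G : TSGraph α) (v : α) (hv : G.verts = {v}) (hts : G.TS = {v})
      (hadj : ∀ u w, ¬ G.Adj u w) (hP : P G) : FromDecompTree P G
  | ttwin (G Gl Gr : TSGraph α) (hl : FromDecompTree P Gl) (hr : FromDecompTree P Gr)
      (h : IsTrueTwin G Gl Gr) (hP : P G) : FromDecompTree P G
  | ftwin (G Gl Gr : TSGraph α) (hl : FromDecompTree P Gl) (hr : FromDecompTree P Gr)
      (h : IsFalseTwin G Gl Gr) (hP : P G) : FromDecompTree P G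
  | attach (G Gl Gr : TSGraph α) (hl : FromDecompTree P Gl) (hr : FromDecompTree P Gr)
      (h : IsAttach G Gl Gr) (hP : P G) : FromDecompTree P G

end TSGraph

open TSGraph

private lemma even_card_of_invol {α : Type*} [DecidableEq α] :
    ∀ (T : Finset α) (f : α → α), (∀ v ∈ T, f v ∈ T ∧ f v ≠ v ∧ f (f v) = v) → Even T.card := by
  intro T
  induction T using Finset.strongInductionOn with
  | _ T ih =>
    intro f hf
    rcases T.eq_empty_or_nonempty with h | ⟨v, hv⟩
    · simp [h]
    · obtain ⟨hfv, hne, hff⟩ := hf v hv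
      have hsub : {v, f v} ⊆ T := by
        intro x hx
        simp only [Finset.mem_insert, Finset.mem_singleton] at hx
        rcases hx with rfl | rfl <;> assumption
      have hss : T \ {v, f v} ⊂ T := by
        refine Finset.sdiff_ssubset hsub ?_
        exact ⟨v, by simp⟩
      have hf' : ∀ w ∈ T \ {v, f v}, f w ∈ T \ {v, f v} ∧ f w ≠ w ∧ f (f w) = w := by
        intro w hw
        simp only [Finset.mem_sdiff, Finset.mem_insert, Finset.mem_singleton] at hw
        obtain ⟨hwT, hw2⟩ := hw
        push_neg at hw2
        obtain ⟨h1, h2, h3⟩ := hf w hwT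
        refine ⟨?_, h2, h3⟩
        simp only [Finset.mem_sdiff, Finset.mem_insert, Finset.mem_singleton]
        refine ⟨h1, ?_⟩
        push_neg
        constructor
        · intro hfw; apply hw2.2; rw [← h3, hfw]
        · intro hfw; apply hw2.1; rw [← h3, hfw, hff]
      have hEven := ih _ hss f hf'
      have hc2 : ({v, f v} : Finset α).card = 2 := by
        rw [Finset.card_insert_of_notMem (by simp [Ne.symm hne]), Finset.card_singleton]
      have hcs : (T \ {v, f v}).card + 2 = T.card := by
        rw [← hc2]; exact Finset.card_sdiff_add_card_eq_card hsub
      rw [Nat.even_iff] at hEven ⊢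
      omega

private lemma pm_even {α : Type*} [DecidableEq α] (H : TSGraph α) {T : Finset α} {f : α → α}
    (hf : H.IsPM T f) : Even T.card := by
  apply even_card_of_invol T f
  intro v hv
  obtain ⟨h1, h2, h3⟩ := hf v hv
  exact ⟨h1, fun he => H.irrefl v (by rw [he] at h2; exact h2), h3⟩

private lemma adm_card_parity {α : Type*} [DecidableEq α] (H : TSGraph α) {k : ℕ} {S : Finset α}
    (h : H.Adm k S) : S.card % 2 = k % 2 := by
  obtain ⟨-, -, X, hX, hXcard, f, hf⟩ := h
  have hXS : X ⊆ S := hX.trans Finset.inter_subset_left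
  have h1 : (S \ X).card + X.card = S.card := Finset.card_sdiff_add_card_eq_card hXS
  have h2 : Even (S \ X).card := pm_even H hf
  rw [Nat.even_iff] at h2
  omega

private lemma gamma_le {α : Type*} [DecidableEq α] (H : TSGraph α) {k : ℕ} {S : Finset α}
    (h : H.Adm k S) : H.gamma k ≤ S.card := Nat.sInf_le ⟨S, h, rfl⟩

private lemma exists_gamma {α : Type*} [DecidableEq α] (H : TSGraph α) {k : ℕ}
    (h : ∃ S, H.Adm k S) : ∃ S, H.Adm k S ∧ S.card = H.gamma k := by
  obtain ⟨S, hS⟩ := h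
  have : H.gamma k ∈ {n | ∃ S, H.Adm k S ∧ S.card = n} := Nat.sInf_mem ⟨S.card, S, hS, rfl⟩
  exact this

private lemma minVal_le {α : Type*} [DecidableEq α] (H : TSGraph α) {k : ℕ}
    (h : k ≤ H.TS.card) : H.minVal ≤ H.gamma k := Nat.sInf_le ⟨k, h, rfl⟩

private lemma exists_minVal {α : Type*} [DecidableEq α] (H : TSGraph α) :
    ∃ k, k ≤ H.TS.card ∧ H.gamma k = H.minVal := by
  have : H.minVal ∈ {n | ∃ k ≤ H.TS.card, H.gamma k = n} :=
    Nat.sInf_mem ⟨H.gamma 0, 0, Nat.zero_le _, rfl⟩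
  obtain ⟨k, hk, h⟩ := this
  exact ⟨k, hk, h⟩

private lemma alpha_spec {α : Type*} [DecidableEq α] (H : TSGraph α) :
    H.alphaVal ≤ H.TS.card ∧ H.gamma H.alphaVal = H.minVal := by
  have : H.alphaVal ∈ {k | k ≤ H.TS.card ∧ H.gamma k = H.minVal} := by
    obtain ⟨k, hk, h⟩ := exists_minVal H
    exact Nat.sInf_mem ⟨k, hk, h⟩
  exact this

private lemma beta_spec {α : Type*} [DecidableEq α] (H : TSGraph α) :
    H.betaVal ≤ H.TS.card ∧ H.gamma H.betaVal = H.minVal := by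
  have : H.betaVal ∈ {k | k ≤ H.TS.card ∧ H.gamma k = H.minVal} := by
    obtain ⟨k, hk, h⟩ := exists_minVal H
    exact Nat.sSup_mem ⟨k, hk, h⟩ ⟨H.TS.card, fun x hx => hx.1⟩
  exact this

private lemma alpha_le_of {α : Type*} [DecidableEq α] (H : TSGraph α) {k : ℕ}
    (hk : k ≤ H.TS.card) (h : H.gamma k = H.minVal) : H.alphaVal ≤ k :=
  Nat.sInf_le ⟨hk, h⟩

private lemma le_beta_of {α : Type*} [DecidableEq α] (H : TSGraph α) {k : ℕ}
    (hk : k ≤ H.TS.card) (h : H.gamma k = H.minVal) : k ≤ H.betaVal :=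
  le_csSup ⟨H.TS.card, fun x hx => hx.1⟩ ⟨hk, h⟩

private lemma gamma_parity {α : Type*} [DecidableEq α] (H : TSGraph α)
    (hA : H.AllDkNonempty) {k : ℕ} (hk : k ≤ H.TS.card) : H.gamma k % 2 = k % 2 := by
  obtain ⟨S, hS⟩ := hA k hk
  obtain ⟨S', hS', hc⟩ := exists_gamma H ⟨S, hS.1⟩
  rw [← hc]
  exact adm_card_parity H hS'

private lemma mem_A_iff {α : Type*} [DecidableEq α] (H : TSGraph α)
    (hA : H.AllDkNonempty) (h2 : H.Eq2Holds) (i : ℕ) :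
    (i ≤ H.TS.card ∧ H.gamma i = H.minVal) ↔
      (H.alphaVal ≤ i ∧ i ≤ H.betaVal ∧ i % 2 = H.alphaVal % 2) := by
  constructor
  · rintro ⟨hi, hgi⟩
    refine ⟨alpha_le_of H hi hgi, le_beta_of H hi hgi, ?_⟩
    have p1 := gamma_parity H hA hi
    have p2 := gamma_parity H hA (alpha_spec H).1
    rw [hgi] at p1
    rw [(alpha_spec H).2] at p2
    omega
  · rintro ⟨h1, h2', h3⟩
    have hic : i ≤ H.TS.card := le_trans h2' (beta_spec H).1
    refine ⟨hic, ?_⟩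
    rcases eq_or_lt_of_le h1 with heq | h1'
    · rw [← heq]; exact (alpha_spec H).2
    rcases eq_or_lt_of_le h2' with heq | h2''
    · rw [heq]; exact (beta_spec H).2
    · exact (h2 i hic).2.2.1 h1' h2'' (by rw [Nat.even_iff]; omega)
private lemma tt_combine {α : Type*} [DecidableEq α] {G Gl Gr : TSGraph α}
    (hcomp : IsTrueTwin G Gl Gr) {i j m : ℕ} {Sl Sr : Finset α}
    (hi : Gl.Adm i Sl) (hj : Gr.Adm j Sr) (hmi : m ≤ i) (hmj : m ≤ j) :
    G.Adm (i + j - 2 * m) (Sl ∪ Sr) := by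
  classical
  obtain ⟨hdisj, hverts, hadj, hTS⟩ := hcomp
  obtain ⟨hSl, hdomL, Xl, hXl, hXlc, fl, hfl⟩ := hi
  obtain ⟨hSr, hdomR, Xr, hXr, hXrc, fr, hfr⟩ := hj
  have hdisj' : ∀ x : α, x ∈ Gl.verts → x ∈ Gr.verts → False := by
    intro x h1 h2; exact Finset.disjoint_left.mp hdisj h1 h2
  have hTSlV : Gl.TS ⊆ Gl.verts := Gl.TS_sub
  have hTSrV : Gr.TS ⊆ Gr.verts := Gr.TS_sub
  have hXlS : Xl ⊆ Sl := hXl.trans Finset.inter_subset_left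
  have hXlT : Xl ⊆ Gl.TS := hXl.trans Finset.inter_subset_right
  have hXrS : Xr ⊆ Sr := hXr.trans Finset.inter_subset_left
  have hXrT : Xr ⊆ Gr.TS := hXr.trans Finset.inter_subset_right
  obtain ⟨Ml, hMl, hMlc⟩ := Finset.exists_subset_card_eq (show m ≤ Xl.card by omega)
  obtain ⟨Mr, hMr, hMrc⟩ := Finset.exists_subset_card_eq (show m ≤ Xr.card by omega)
  have e : (Ml : Set α) ≃ (Mr : Set α) := Finset.equivOfCardEq (hMlc.trans hMrc.symm)
  -- side membership facts
  have hMlV : ∀ x ∈ Ml, x ∈ Gl.verts := fun x hx => hTSlV (hXlT (hMl hx))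
  have hMrV : ∀ x ∈ Mr, x ∈ Gr.verts := fun x hx => hTSrV (hXrT (hMr hx))
  have hSlV : ∀ x ∈ Sl, x ∈ Gl.verts := fun x hx => hSl hx
  have hSrV : ∀ x ∈ Sr, x ∈ Gr.verts := fun x hx => hSr hx
  set f : α → α := fun v =>
    if h : v ∈ Ml then (e ⟨v, h⟩ : α)
    else if h : v ∈ Mr then (e.symm ⟨v, h⟩ : α)
    else if v ∈ Sl then fl v else fr v with hfdef
  have fMl : ∀ (v : α) (h : v ∈ Ml), f v = (e ⟨v, h⟩ : α) := by
    intro v h; simp only [hfdef, dif_pos h]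
  have fMr : ∀ (v : α) (h : v ∈ Mr), f v = (e.symm ⟨v, h⟩ : α) := by
    intro v h
    have hnl : v ∉ Ml := fun hc => hdisj' v (hMlV v hc) (hMrV v h)
    simp only [hfdef, dif_neg hnl, dif_pos h]
  have fSl : ∀ v ∈ Sl, v ∉ Ml → f v = fl v := by
    intro v hv hnl
    have hnr : v ∉ Mr := fun hc => hdisj' v (hSlV v hv) (hMrV v hc)
    simp only [hfdef, dif_neg hnl, dif_neg hnr, if_pos hv]
  have fSr : ∀ v ∈ Sr, v ∉ Mr → f v = fr v := by
    intro v hv hnr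
    have hnl : v ∉ Ml := fun hc => hdisj' v (hMlV v hc) (hSrV v hv)
    have hns : v ∉ Sl := fun hc => hdisj' v (hSlV v hc) (hSrV v hv)
    simp only [hfdef, dif_neg hnl, dif_neg hnr, if_neg hns]
  refine ⟨?_, ?_, (Xl \ Ml) ∪ (Xr \ Mr), ?_, ?_, f, ?_⟩
  · rw [hverts]; exact Finset.union_subset_union hSl hSr
  · intro v hv hvT
    rw [hverts, Finset.mem_union] at hv
    rw [hTS, Finset.mem_union] at hvT
    push_neg at hvT
    rcases hv with hv | hv
    · rcases hdomL v hv hvT.1 with h | ⟨u, hu, hadj'⟩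
      · exact Or.inl (Finset.mem_union_left _ h)
      · exact Or.inr ⟨u, Finset.mem_union_left _ hu, (hadj u v).mpr (Or.inl hadj')⟩
    · rcases hdomR v hv hvT.2 with h | ⟨u, hu, hadj'⟩
      · exact Or.inl (Finset.mem_union_right _ h)
      · exact Or.inr ⟨u, Finset.mem_union_right _ hu, (hadj u v).mpr (Or.inr (Or.inl hadj'))⟩
  · intro x hx
    rw [Finset.mem_union] at hx
    rw [Finset.mem_inter, Finset.mem_union, hTS, Finset.mem_union]
    rcases hx with hx | hx
    · have := Finset.mem_sdiff.mp hx
      exact ⟨Or.inl (hXlS this.1), Or.inl (hXlT this.1)⟩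
    · have := Finset.mem_sdiff.mp hx
      exact ⟨Or.inr (hXrS this.1), Or.inr (hXrT this.1)⟩
  · have hd : Disjoint (Xl \ Ml) (Xr \ Mr) := by
      rw [Finset.disjoint_left]
      intro x hx1 hx2
      exact hdisj' x (hTSlV (hXlT (Finset.mem_sdiff.mp hx1).1))
        (hTSrV (hXrT (Finset.mem_sdiff.mp hx2).1))
    rw [Finset.card_union_of_disjoint hd, Finset.card_sdiff_of_subset hMl, Finset.card_sdiff_of_subset hMr]
    omega
  · -- the perfect matching
    intro v hv
    rw [Finset.mem_sdiff] at hv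
    obtain ⟨hvS, hvX⟩ := hv
    have hvX1 : v ∉ Xl \ Ml := fun hc => hvX (Finset.mem_union_left _ hc)
    have hvX2 : v ∉ Xr \ Mr := fun hc => hvX (Finset.mem_union_right _ hc)
    have memgoal : ∀ w : α, (w ∈ Sl ∪ Sr) → w ∉ Xl \ Ml → w ∉ Xr \ Mr →
        w ∈ (Sl ∪ Sr) \ ((Xl \ Ml) ∪ (Xr \ Mr)) := by
      intro w h1 h2 h3
      rw [Finset.mem_sdiff]
      exact ⟨h1, fun hc => (Finset.mem_union.mp hc).elim h2 h3⟩
    by_cases hvMl : v ∈ Ml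
    · -- cross pair, left side
      set w : α := (e ⟨v, hvMl⟩ : α) with hw
      have hwMr : w ∈ Mr := (e ⟨v, hvMl⟩).2
      have hfv : f v = w := fMl v hvMl
      refine ⟨?_, ?_, ?_⟩
      · rw [hfv]
        refine memgoal w (Finset.mem_union_right _ (hXrS (hMr hwMr))) ?_
          (fun hc => (Finset.mem_sdiff.mp hc).2 hwMr)
        intro hc
        exact hdisj' w (hTSlV (hXlT (Finset.mem_sdiff.mp hc).1)) (hMrV w hwMr)
      · rw [hfv]
        exact (hadj v w).mpr (Or.inr (Or.inr (Or.inl ⟨hXlT (hMl hvMl), hXrT (hMr hwMr)⟩)))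
      · rw [hfv, fMr w hwMr]
        have : (⟨w, hwMr⟩ : (Mr : Set α)) = e ⟨v, hvMl⟩ := Subtype.ext rfl
        rw [this, Equiv.symm_apply_apply]
    · by_cases hvMr : v ∈ Mr
      · set w : α := (e.symm ⟨v, hvMr⟩ : α) with hw
        have hwMl : w ∈ Ml := (e.symm ⟨v, hvMr⟩).2
        have hfv : f v = w := fMr v hvMr
        refine ⟨?_, ?_, ?_⟩
        · rw [hfv]
          refine memgoal w (Finset.mem_union_left _ (hXlS (hMl hwMl)))
            (fun hc => (Finset.mem_sdiff.mp hc).2 hwMl) ?_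
          intro hc
          exact hdisj' w (hMlV w hwMl) (hTSrV (hXrT (Finset.mem_sdiff.mp hc).1))
        · rw [hfv]
          exact (hadj v w).mpr (Or.inr (Or.inr (Or.inr ⟨hXrT (hMr hvMr), hXlT (hMl hwMl)⟩)))
        · rw [hfv, fMl w hwMl]
          have : (⟨w, hwMl⟩ : (Ml : Set α)) = e.symm ⟨v, hvMr⟩ := Subtype.ext rfl
          rw [this, Equiv.apply_symm_apply]
      · rw [Finset.mem_union] at hvS
        rcases hvS with hvSl | hvSr
        · -- v in Sl, matched by fl
          have hvXl : v ∉ Xl := by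
            intro hc
            exact hvX1 (Finset.mem_sdiff.mpr ⟨hc, hvMl⟩)
          obtain ⟨h1, h2, h3⟩ := hfl v (Finset.mem_sdiff.mpr ⟨hvSl, hvXl⟩)
          rw [Finset.mem_sdiff] at h1
          have hfvMl : fl v ∉ Ml := fun hc => h1.2 (hMl hc)
          have hfv : f v = fl v := fSl v hvSl hvMl
          refine ⟨?_, ?_, ?_⟩
          · rw [hfv]
            refine memgoal (fl v) (Finset.mem_union_left _ h1.1)
              (fun hc => h1.2 (Finset.mem_sdiff.mp hc).1) ?_
            intro hc
            exact hdisj' (fl v) (hSlV _ h1.1) (hTSrV (hXrT (Finset.mem_sdiff.mp hc).1))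
          · rw [hfv]; exact (hadj v (fl v)).mpr (Or.inl h2)
          · rw [hfv, fSl (fl v) h1.1 hfvMl, h3]
        · have hvXr : v ∉ Xr := by
            intro hc
            exact hvX2 (Finset.mem_sdiff.mpr ⟨hc, hvMr⟩)
          obtain ⟨h1, h2, h3⟩ := hfr v (Finset.mem_sdiff.mpr ⟨hvSr, hvXr⟩)
          rw [Finset.mem_sdiff] at h1
          have hfvMr : fr v ∉ Mr := fun hc => h1.2 (hMr hc)
          have hfv : f v = fr v := fSr v hvSr hvMr
          refine ⟨?_, ?_, ?_⟩
          · rw [hfv]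
            refine memgoal (fr v) (Finset.mem_union_right _ h1.1) ?_
              (fun hc => h1.2 (Finset.mem_sdiff.mp hc).1)
            intro hc
            exact hdisj' (fr v) (hTSlV (hXlT (Finset.mem_sdiff.mp hc).1)) (hSrV _ h1.1)
          · rw [hfv]; exact (hadj v (fr v)).mpr (Or.inr (Or.inl h2))
          · rw [hfv, fSr (fr v) h1.1 hfvMr, h3]
private lemma tt_split {α : Type*} [DecidableEq α] {G Gl Gr : TSGraph α}
    (hcomp : IsTrueTwin G Gl Gr) {k : ℕ} {S : Finset α} (h : G.Adm k S) :
    ∃ i j, Gl.Adm i (S ∩ Gl.verts) ∧ Gr.Adm j (S ∩ Gr.verts) ∧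
      i ≤ Gl.TS.card ∧ j ≤ Gr.TS.card ∧
      i ≤ j + k ∧ j ≤ i + k ∧ k ≤ i + j ∧ (i + j - k) % 2 = 0 ∧
      (S ∩ Gl.verts).card + (S ∩ Gr.verts).card = S.card := by
  classical
  obtain ⟨hdisj, hverts, hadj, hTS⟩ := hcomp
  obtain ⟨hSV, hdom, X, hX, hXc, f, hf⟩ := h
  have hdisj' : ∀ x : α, x ∈ Gl.verts → x ∈ Gr.verts → False := by
    intro x h1 h2; exact Finset.disjoint_left.mp hdisj h1 h2
  have hTSlV : Gl.TS ⊆ Gl.verts := Gl.TS_sub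
  have hTSrV : Gr.TS ⊆ Gr.verts := Gr.TS_sub
  set Sl := S ∩ Gl.verts with hSldef
  set Sr := S ∩ Gr.verts with hSrdef
  have hXS : X ⊆ S := hX.trans Finset.inter_subset_left
  have hXT : X ⊆ G.TS := hX.trans Finset.inter_subset_right
  set Xl := X ∩ Gl.verts with hXldef
  set Xr := X ∩ Gr.verts with hXrdef
  -- side splits
  have hsplit : ∀ (T : Finset α), T ⊆ G.verts →
      (T ∩ Gl.verts).card + (T ∩ Gr.verts).card = T.card := by
    intro T hT
    have hu : (T ∩ Gl.verts) ∪ (T ∩ Gr.verts) = T := by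
      rw [← Finset.inter_union_distrib_left]
      refine Finset.inter_eq_left.mpr ?_
      intro x hx
      rw [← hverts]; exact hT hx
    have hd : Disjoint (T ∩ Gl.verts) (T ∩ Gr.verts) := by
      rw [Finset.disjoint_left]
      intro x h1 h2
      exact hdisj' x (Finset.mem_inter.mp h1).2 (Finset.mem_inter.mp h2).2
    rw [← Finset.card_union_of_disjoint hd, hu]
  have hXV : X ⊆ G.verts := hXT.trans G.TS_sub
  have hXsplit := hsplit X hXV
  -- X side membership: Xl ⊆ TSl, Xr ⊆ TSr
  have hXlT : Xl ⊆ Gl.TS := by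
    intro x hx
    obtain ⟨hx1, hx2⟩ := Finset.mem_inter.mp hx
    have := hXT hx1
    rw [hTS, Finset.mem_union] at this
    rcases this with h' | h'
    · exact h'
    · exact absurd (hTSrV h') (fun hc => hdisj' x hx2 hc)
  have hXrT : Xr ⊆ Gr.TS := by
    intro x hx
    obtain ⟨hx1, hx2⟩ := Finset.mem_inter.mp hx
    have := hXT hx1
    rw [hTS, Finset.mem_union] at this
    rcases this with h' | h'
    · exact absurd (hTSlV h') (fun hc => hdisj' x hc hx2)
    · exact h'
  -- cross sets
  set Cl := (S \ X).filter (fun v => v ∈ Gl.verts ∧ f v ∈ Gr.verts) with hCldef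
  set Cr := (S \ X).filter (fun v => v ∈ Gr.verts ∧ f v ∈ Gl.verts) with hCrdef
  have hSV' : ∀ x ∈ S, x ∈ Gl.verts ∨ x ∈ Gr.verts := by
    intro x hx
    have := hSV hx
    rw [hverts, Finset.mem_union] at this
    exact this
  have hClspec : ∀ v ∈ Cl, v ∈ Gl.TS ∧ f v ∈ Gr.TS ∧ f v ∈ Cr := by
    intro v hv
    rw [hCldef, Finset.mem_filter] at hv
    obtain ⟨hv1, hv2, hv3⟩ := hv
    obtain ⟨hm, ha, hinv⟩ := hf v hv1
    have hvl : v ∉ Gr.verts := fun hc => hdisj' v hv2 hc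
    have hfvr : f v ∉ Gl.verts := fun hc => hdisj' (f v) hc hv3
    have hcross : v ∈ Gl.TS ∧ f v ∈ Gr.TS := by
      rcases (hadj v (f v)).mp ha with h' | h' | h' | h'
      · exact absurd ((Gl.adj_mem _ _ h').2) hfvr
      · exact absurd ((Gr.adj_mem _ _ h').1) hvl
      · exact h'
      · exact absurd (hTSrV h'.1) hvl
    refine ⟨hcross.1, hcross.2, ?_⟩
    rw [hCrdef, Finset.mem_filter]
    exact ⟨hm, hv3, by rw [hinv]; exact hv2⟩
  have hCrspec : ∀ v ∈ Cr, v ∈ Gr.TS ∧ f v ∈ Gl.TS ∧ f v ∈ Cl := by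
    intro v hv
    rw [hCrdef, Finset.mem_filter] at hv
    obtain ⟨hv1, hv2, hv3⟩ := hv
    obtain ⟨hm, ha, hinv⟩ := hf v hv1
    have hvl : v ∉ Gl.verts := fun hc => hdisj' v hc hv2
    have hfvr : f v ∉ Gr.verts := fun hc => hdisj' (f v) hv3 hc
    have hcross : v ∈ Gr.TS ∧ f v ∈ Gl.TS := by
      rcases (hadj v (f v)).mp ha with h' | h' | h' | h'
      · exact absurd ((Gl.adj_mem _ _ h').1) hvl
      · exact absurd ((Gr.adj_mem _ _ h').2) hfvr
      · exact absurd (hTSlV h'.1) hvl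
      · exact h'
    refine ⟨hcross.1, hcross.2, ?_⟩
    rw [hCldef, Finset.mem_filter]
    exact ⟨hm, hv3, by rw [hinv]; exact hv2⟩
  -- equal cardinalities of cross sets
  have hCcard : Cl.card = Cr.card := by
    have himg : Cr = Cl.image f := by
      apply Finset.Subset.antisymm
      · intro w hw
        obtain ⟨-, -, hfw⟩ := hCrspec w hw
        have hwm : w ∈ S \ X := (Finset.mem_filter.mp hw).1
        obtain ⟨-, -, hinv⟩ := hf w hwm
        rw [Finset.mem_image]
        exact ⟨f w, hfw, hinv⟩
      · intro w hw
        rw [Finset.mem_image] at hw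
        obtain ⟨v, hv, rfl⟩ := hw
        exact (hClspec v hv).2.2
    rw [himg]
    refine (Finset.card_image_of_injOn ?_).symm
    intro a ha b hb hab
    have h1 := (hf a (Finset.mem_filter.mp ha).1).2.2
    have h2 := (hf b (Finset.mem_filter.mp hb).1).2.2
    rw [← h1, ← h2, hab]
  -- build left admissibility
  have hadmL : Gl.Adm (Xl.card + Cl.card) Sl := by
    refine ⟨Finset.inter_subset_right, ?_, Xl ∪ Cl, ?_, ?_, f, ?_⟩
    · -- domination
      intro v hv hvT
      have hvG : v ∈ G.verts := by rw [hverts, Finset.mem_union]; exact Or.inl hv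
      have hvnT : v ∉ G.TS := by
        rw [hTS, Finset.mem_union]
        rintro (h' | h')
        · exact hvT h'
        · exact hdisj' v hv (hTSrV h')
      rcases hdom v hvG hvnT with h' | ⟨u, hu, ha⟩
      · exact Or.inl (Finset.mem_inter.mpr ⟨h', hv⟩)
      · have huV : u ∈ Gl.verts := by
          rcases hSV' u hu with h'' | h''
          · exact h''
          · exfalso
            rcases (hadj u v).mp ha with h3 | h3 | h3 | h3
            · exact hdisj' u (Gl.adj_mem _ _ h3).1 h''
            · exact hdisj' v hv (Gr.adj_mem _ _ h3).2
            · exact hdisj' u (hTSlV h3.1) h''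
            · exact hvT h3.2
        have hGlAdj : Gl.Adj u v := by
          rcases (hadj u v).mp ha with h3 | h3 | h3 | h3
          · exact h3
          · exact absurd ((Gr.adj_mem _ _ h3).2) (fun hc => hdisj' v hv hc)
          · exact absurd (hTSrV h3.2) (fun hc => hdisj' v hv hc)
          · exact absurd h3.2 hvT
        exact Or.inr ⟨u, Finset.mem_inter.mpr ⟨hu, huV⟩, hGlAdj⟩
    · -- Xl ∪ Cl ⊆ Sl ∩ TSl
      intro x hx
      rw [Finset.mem_union] at hx
      rw [Finset.mem_inter]
      rcases hx with hx | hx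
      · obtain ⟨h1, h2⟩ := Finset.mem_inter.mp hx
        exact ⟨Finset.mem_inter.mpr ⟨hXS h1, h2⟩, hXlT hx⟩
      · have h1 := (Finset.mem_filter.mp hx).1
        have h2 := (Finset.mem_filter.mp hx).2.1
        exact ⟨Finset.mem_inter.mpr ⟨(Finset.mem_sdiff.mp h1).1, h2⟩, (hClspec x hx).1⟩
    · -- cardinality
      refine Finset.card_union_of_disjoint ?_
      rw [Finset.disjoint_left]
      intro x h1 h2
      exact (Finset.mem_sdiff.mp (Finset.mem_filter.mp h2).1).2 (Finset.mem_inter.mp h1).1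
    · -- matching
      intro v hv
      rw [Finset.mem_sdiff] at hv
      obtain ⟨hv1, hv2⟩ := hv
      obtain ⟨hvS, hvV⟩ := Finset.mem_inter.mp hv1
      have hvXl : v ∉ Xl := fun hc => hv2 (Finset.mem_union_left _ hc)
      have hvCl : v ∉ Cl := fun hc => hv2 (Finset.mem_union_right _ hc)
      have hvX : v ∉ X := fun hc => hvXl (Finset.mem_inter.mpr ⟨hc, hvV⟩)
      have hvSX : v ∈ S \ X := Finset.mem_sdiff.mpr ⟨hvS, hvX⟩
      obtain ⟨hm, ha, hinv⟩ := hf v hvSX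
      have hfvV : f v ∈ Gl.verts := by
        rcases hSV' (f v) (Finset.mem_sdiff.mp hm).1 with h' | h'
        · exact h'
        · exact absurd (Finset.mem_filter.mpr ⟨hvSX, hvV, h'⟩) hvCl
      have hfvSl : f v ∈ Sl := Finset.mem_inter.mpr ⟨(Finset.mem_sdiff.mp hm).1, hfvV⟩
      refine ⟨?_, ?_, hinv⟩
      · rw [Finset.mem_sdiff]
        refine ⟨hfvSl, ?_⟩
        intro hc
        rw [Finset.mem_union] at hc
        rcases hc with hc | hc
        · exact (Finset.mem_sdiff.mp hm).2 (Finset.mem_inter.mp hc).1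
        · have := (Finset.mem_filter.mp hc).2.2
          rw [hinv] at this
          exact hdisj' v hvV this
      · rcases (hadj v (f v)).mp ha with h3 | h3 | h3 | h3
        · exact h3
        · exact absurd ((Gr.adj_mem _ _ h3).1) (fun hc => hdisj' v hvV hc)
        · exact absurd (hTSrV h3.2) (fun hc => hdisj' (f v) hfvV hc)
        · exact absurd (hTSrV h3.1) (fun hc => hdisj' v hvV hc)
  have hadmR : Gr.Adm (Xr.card + Cr.card) Sr := by
    refine ⟨Finset.inter_subset_right, ?_, Xr ∪ Cr, ?_, ?_, f, ?_⟩
    · intro v hv hvT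
      have hvG : v ∈ G.verts := by rw [hverts, Finset.mem_union]; exact Or.inr hv
      have hvnT : v ∉ G.TS := by
        rw [hTS, Finset.mem_union]
        rintro (h' | h')
        · exact hdisj' v (hTSlV h') hv
        · exact hvT h'
      rcases hdom v hvG hvnT with h' | ⟨u, hu, ha⟩
      · exact Or.inl (Finset.mem_inter.mpr ⟨h', hv⟩)
      · have huV : u ∈ Gr.verts := by
          rcases hSV' u hu with h'' | h''
          · exfalso
            rcases (hadj u v).mp ha with h3 | h3 | h3 | h3
            · exact hdisj' v (Gl.adj_mem _ _ h3).2 hv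
            · exact hdisj' u h'' (Gr.adj_mem _ _ h3).1
            · exact hvT h3.2
            · exact hdisj' u h'' (hTSrV h3.1)
          · exact h''
        have hGrAdj : Gr.Adj u v := by
          rcases (hadj u v).mp ha with h3 | h3 | h3 | h3
          · exact absurd ((Gl.adj_mem _ _ h3).2) (fun hc => hdisj' v hc hv)
          · exact h3
          · exact absurd h3.2 hvT
          · exact absurd (hTSlV h3.2) (fun hc => hdisj' v hc hv)
        exact Or.inr ⟨u, Finset.mem_inter.mpr ⟨hu, huV⟩, hGrAdj⟩
    · intro x hx
      rw [Finset.mem_union] at hx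
      rw [Finset.mem_inter]
      rcases hx with hx | hx
      · obtain ⟨h1, h2⟩ := Finset.mem_inter.mp hx
        exact ⟨Finset.mem_inter.mpr ⟨hXS h1, h2⟩, hXrT hx⟩
      · have h1 := (Finset.mem_filter.mp hx).1
        have h2 := (Finset.mem_filter.mp hx).2.1
        exact ⟨Finset.mem_inter.mpr ⟨(Finset.mem_sdiff.mp h1).1, h2⟩, (hCrspec x hx).1⟩
    · refine Finset.card_union_of_disjoint ?_
      rw [Finset.disjoint_left]
      intro x h1 h2
      exact (Finset.mem_sdiff.mp (Finset.mem_filter.mp h2).1).2 (Finset.mem_inter.mp h1).1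
    · intro v hv
      rw [Finset.mem_sdiff] at hv
      obtain ⟨hv1, hv2⟩ := hv
      obtain ⟨hvS, hvV⟩ := Finset.mem_inter.mp hv1
      have hvXr : v ∉ Xr := fun hc => hv2 (Finset.mem_union_left _ hc)
      have hvCr : v ∉ Cr := fun hc => hv2 (Finset.mem_union_right _ hc)
      have hvX : v ∉ X := fun hc => hvXr (Finset.mem_inter.mpr ⟨hc, hvV⟩)
      have hvSX : v ∈ S \ X := Finset.mem_sdiff.mpr ⟨hvS, hvX⟩
      obtain ⟨hm, ha, hinv⟩ := hf v hvSX
      have hfvV : f v ∈ Gr.verts := by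
        rcases hSV' (f v) (Finset.mem_sdiff.mp hm).1 with h' | h'
        · exact absurd (Finset.mem_filter.mpr ⟨hvSX, hvV, h'⟩) hvCr
        · exact h'
      have hfvSr : f v ∈ Sr := Finset.mem_inter.mpr ⟨(Finset.mem_sdiff.mp hm).1, hfvV⟩
      refine ⟨?_, ?_, hinv⟩
      · rw [Finset.mem_sdiff]
        refine ⟨hfvSr, ?_⟩
        intro hc
        rw [Finset.mem_union] at hc
        rcases hc with hc | hc
        · exact (Finset.mem_sdiff.mp hm).2 (Finset.mem_inter.mp hc).1
        · have := (Finset.mem_filter.mp hc).2.2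
          rw [hinv] at this
          exact hdisj' v this hvV
      · rcases (hadj v (f v)).mp ha with h3 | h3 | h3 | h3
        · exact absurd ((Gl.adj_mem _ _ h3).1) (fun hc => hdisj' v hc hvV)
        · exact h3
        · exact absurd (hTSlV h3.1) (fun hc => hdisj' v hc hvV)
        · exact absurd (hTSlV h3.2) (fun hc => hdisj' (f v) hc hfvV)
  -- card bounds via subsets of TS
  have hiTS : Xl.card + Cl.card ≤ Gl.TS.card := by
    have : Xl ∪ Cl ⊆ Gl.TS := by
      intro x hx
      rw [Finset.mem_union] at hx
      rcases hx with hx | hx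
      · exact hXlT hx
      · exact (hClspec x hx).1
    calc Xl.card + Cl.card = (Xl ∪ Cl).card := by
          refine (Finset.card_union_of_disjoint ?_).symm
          rw [Finset.disjoint_left]
          intro x h1 h2
          exact (Finset.mem_sdiff.mp (Finset.mem_filter.mp h2).1).2 (Finset.mem_inter.mp h1).1
      _ ≤ Gl.TS.card := Finset.card_le_card this
  have hjTS : Xr.card + Cr.card ≤ Gr.TS.card := by
    have : Xr ∪ Cr ⊆ Gr.TS := by
      intro x hx
      rw [Finset.mem_union] at hx
      rcases hx with hx | hx
      · exact hXrT hx
      · exact (hCrspec x hx).1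
    calc Xr.card + Cr.card = (Xr ∪ Cr).card := by
          refine (Finset.card_union_of_disjoint ?_).symm
          rw [Finset.disjoint_left]
          intro x h1 h2
          exact (Finset.mem_sdiff.mp (Finset.mem_filter.mp h2).1).2 (Finset.mem_inter.mp h1).1
      _ ≤ Gr.TS.card := Finset.card_le_card this
  have hX2 : Xl.card + Xr.card = X.card := hXsplit
  refine ⟨Xl.card + Cl.card, Xr.card + Cr.card, hadmL, hadmR, hiTS, hjTS, ?_, ?_, ?_, ?_,
    hsplit S hSV⟩
  all_goals omega
private lemma tt_gamma_le {α : Type*} [DecidableEq α] {G Gl Gr : TSGraph α}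
    (hcomp : IsTrueTwin G Gl Gr) (hGl : Gl.AllDkNonempty) (hGr : Gr.AllDkNonempty)
    {i j k : ℕ} (hi : i ≤ Gl.TS.card) (hj : j ≤ Gr.TS.card)
    (h1 : i ≤ j + k) (h2 : j ≤ i + k) (h3 : k ≤ i + j) (h4 : (i + j - k) % 2 = 0) :
    G.gamma k ≤ Gl.gamma i + Gr.gamma j := by
  obtain ⟨Sl, hSl, hSlc⟩ := exists_gamma Gl ⟨(hGl i hi).choose, (hGl i hi).choose_spec.1⟩
  obtain ⟨Sr, hSr, hSrc⟩ := exists_gamma Gr ⟨(hGr j hj).choose, (hGr j hj).choose_spec.1⟩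
  set m := (i + j - k) / 2 with hm
  have hmi : m ≤ i := by omega
  have hmj : m ≤ j := by omega
  have hk : k = i + j - 2 * m := by omega
  have hadm := tt_combine hcomp hSl hSr hmi hmj
  rw [← hk] at hadm
  have hd : Disjoint Sl Sr := by
    rw [Finset.disjoint_left]
    intro x hx1 hx2
    exact Finset.disjoint_left.mp hcomp.1 (hSl.1 hx1) (hSr.1 hx2)
  calc G.gamma k ≤ (Sl ∪ Sr).card := gamma_le G hadm
    _ = Sl.card + Sr.card := Finset.card_union_of_disjoint hd
    _ = Gl.gamma i + Gr.gamma j := by rw [hSlc, hSrc]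

private lemma tt_gamma_ge {α : Type*} [DecidableEq α] {G Gl Gr : TSGraph α}
    (hcomp : IsTrueTwin G Gl Gr) (hG : G.AllDkNonempty)
    {k : ℕ} (hk : k ≤ G.TS.card) :
    ∃ i j, i ≤ Gl.TS.card ∧ j ≤ Gr.TS.card ∧
      i ≤ j + k ∧ j ≤ i + k ∧ k ≤ i + j ∧ (i + j - k) % 2 = 0 ∧
      Gl.gamma i + Gr.gamma j ≤ G.gamma k := by
  obtain ⟨S, hS, hSc⟩ := exists_gamma G ⟨(hG k hk).choose, (hG k hk).choose_spec.1⟩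
  obtain ⟨i, j, hadmL, hadmR, h1, h2, h3, h4, h5, h6, h7⟩ := tt_split hcomp hS
  refine ⟨i, j, h1, h2, h3, h4, h5, h6, ?_⟩
  calc Gl.gamma i + Gr.gamma j ≤ (S ∩ Gl.verts).card + (S ∩ Gr.verts).card :=
        Nat.add_le_add (gamma_le Gl hadmL) (gamma_le Gr hadmR)
    _ = S.card := h7
    _ = G.gamma k := hSc

private lemma tt_TS_card {α : Type*} [DecidableEq α] {G Gl Gr : TSGraph α}
    (hcomp : IsTrueTwin G Gl Gr) : G.TS.card = Gl.TS.card + Gr.TS.card := by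
  rw [hcomp.2.2.2]
  refine Finset.card_union_of_disjoint ?_
  rw [Finset.disjoint_left]
  intro x h1 h2
  exact Finset.disjoint_left.mp hcomp.1 (Gl.TS_sub h1) (Gr.TS_sub h2)

private lemma tt_minVal {α : Type*} [DecidableEq α] {G Gl Gr : TSGraph α}
    (hcomp : IsTrueTwin G Gl Gr)
    (hG : G.AllDkNonempty) (hGl : Gl.AllDkNonempty) (hGr : Gr.AllDkNonempty) :
    G.minVal = Gl.minVal + Gr.minVal := by
  have hTSc := tt_TS_card hcomp
  apply le_antisymm
  · -- minVal G ≤ ml + mr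
    have hal := alpha_spec Gl
    have har := alpha_spec Gr
    set al := Gl.alphaVal
    set ar := Gr.alphaVal
    set k0 := max al ar - min al ar with hk0
    have hk0c : k0 ≤ G.TS.card := by omega
    have hle := tt_gamma_le hcomp hGl hGr hal.1 har.1
      (show al ≤ ar + k0 by omega) (show ar ≤ al + k0 by omega)
      (show k0 ≤ al + ar by omega) (show (al + ar - k0) % 2 = 0 by omega)
    calc G.minVal ≤ G.gamma k0 := minVal_le G hk0c
      _ ≤ Gl.gamma al + Gr.gamma ar := hle
      _ = Gl.minVal + Gr.minVal := by rw [hal.2, har.2]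
  · -- ml + mr ≤ minVal G
    obtain ⟨k, hk, hkv⟩ := exists_minVal G
    obtain ⟨i, j, hi, hj, -, -, -, -, hle⟩ := tt_gamma_ge hcomp hG hk
    calc Gl.minVal + Gr.minVal ≤ Gl.gamma i + Gr.gamma j :=
          Nat.add_le_add (minVal_le Gl hi) (minVal_le Gr hj)
      _ ≤ G.gamma k := hle
      _ = G.minVal := hkv

private lemma tt_K_iff {α : Type*} [DecidableEq α] {G Gl Gr : TSGraph α}
    (hcomp : IsTrueTwin G Gl Gr)
    (hG : G.AllDkNonempty) (hGl : Gl.AllDkNonempty) (hGr : Gr.AllDkNonempty)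
    {k : ℕ} (hk : k ≤ G.TS.card) :
    G.gamma k = G.minVal ↔
      ∃ i j, (i ≤ Gl.TS.card ∧ Gl.gamma i = Gl.minVal) ∧
        (j ≤ Gr.TS.card ∧ Gr.gamma j = Gr.minVal) ∧
        i ≤ j + k ∧ j ≤ i + k ∧ k ≤ i + j ∧ (i + j - k) % 2 = 0 := by
  have hmin := tt_minVal hcomp hG hGl hGr
  constructor
  · intro hgk
    obtain ⟨i, j, hi, hj, h1, h2, h3, h4, hle⟩ := tt_gamma_ge hcomp hG hk
    have hi' : Gl.minVal ≤ Gl.gamma i := minVal_le Gl hi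
    have hj' : Gr.minVal ≤ Gr.gamma j := minVal_le Gr hj
    rw [hgk, hmin] at hle
    exact ⟨i, j, ⟨hi, by omega⟩, ⟨hj, by omega⟩, h1, h2, h3, h4⟩
  · rintro ⟨i, j, ⟨hi, hgi⟩, ⟨hj, hgj⟩, h1, h2, h3, h4⟩
    have hle := tt_gamma_le hcomp hGl hGr hi hj h1 h2 h3 h4
    rw [hgi, hgj, ← hmin] at hle
    exact le_antisymm hle (minVal_le G hk)

open TSGraph in
/-- For a true twin composition `G = Gl ⊗ Gr` with all `D_k`
families nonempty and Equation (2) holding for `Gl` and `Gr`: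
`α(G) = α(Gl) − β(Gr)` if `α(Gl) > β(Gr)`; `α(G) = α(Gr) − β(Gl)` if
`α(Gr) > β(Gl)`; otherwise `α(G) = |α(Gl) − α(Gr)| mod 2`. -/
theorem stmt8 {α : Type*} [DecidableEq α] (G Gl Gr : TSGraph α)
    (hcomp : IsTrueTwin G Gl Gr)
    (hG : G.AllDkNonempty) (hGl : Gl.AllDkNonempty) (hGr : Gr.AllDkNonempty)
    (hl : Gl.Eq2Holds) (hr : Gr.Eq2Holds) :
    (Gl.alphaVal > Gr.betaVal → G.alphaVal = Gl.alphaVal - Gr.betaVal) ∧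
    (Gr.alphaVal > Gl.betaVal → G.alphaVal = Gr.alphaVal - Gl.betaVal) ∧
    (¬ Gl.alphaVal > Gr.betaVal → ¬ Gr.alphaVal > Gl.betaVal →
      G.alphaVal = ((Gl.alphaVal : ℤ) - (Gr.alphaVal : ℤ)).natAbs % 2) := by
  have hTSc := tt_TS_card hcomp
  have hAl := mem_A_iff Gl hGl hl
  have hAr := mem_A_iff Gr hGr hr
  have hal := alpha_spec Gl
  have hbl := beta_spec Gl
  have har := alpha_spec Gr
  have hbr := beta_spec Gr
  have halbl : Gl.alphaVal ≤ Gl.betaVal := alpha_le_of Gl hbl.1 hbl.2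
  have harbr : Gr.alphaVal ≤ Gr.betaVal := alpha_le_of Gr hbr.1 hbr.2
  have hpbl : Gl.betaVal % 2 = Gl.alphaVal % 2 := by
    have p1 := gamma_parity Gl hGl hbl.1
    have p2 := gamma_parity Gl hGl hal.1
    rw [hbl.2] at p1; rw [hal.2] at p2; omega
  have hpbr : Gr.betaVal % 2 = Gr.alphaVal % 2 := by
    have p1 := gamma_parity Gr hGr hbr.1
    have p2 := gamma_parity Gr hGr har.1
    rw [hbr.2] at p1; rw [har.2] at p2; omega
  set al := Gl.alphaVal
  set bl := Gl.betaVal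
  set ar := Gr.alphaVal
  set br := Gr.betaVal
  have key : ∀ t, (t ≤ G.TS.card ∧ G.gamma t = G.minVal) →
      (∀ k, k ≤ G.TS.card → G.gamma k = G.minVal → t ≤ k) → G.alphaVal = t := by
    intro t hmem hlb
    refine le_antisymm (Nat.sInf_le hmem) (le_csInf ⟨t, hmem⟩ ?_)
    rintro b ⟨hb1, hb2⟩
    exact hlb b hb1 hb2
  refine ⟨?_, ?_, ?_⟩
  · -- case al > br
    intro hcase
    set t := al - br with htdef
    have ht : t ≤ G.TS.card := by omega
    apply key t
    · refine ⟨ht, (tt_K_iff hcomp hG hGl hGr ht).mpr ⟨al, br, ?_, ?_, ?_, ?_, ?_, ?_⟩⟩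
      · exact (hAl al).mpr ⟨le_rfl, halbl, rfl⟩
      · exact (hAr br).mpr ⟨harbr, le_rfl, hpbr⟩
      all_goals omega
    · intro k hk hgk
      obtain ⟨i, j, hi, hj, h1, h2, h3, h4⟩ := (tt_K_iff hcomp hG hGl hGr hk).mp hgk
      have hi' := (hAl i).mp hi
      have hj' := (hAr j).mp hj
      omega
  · -- case ar > bl
    intro hcase
    set t := ar - bl with htdef
    have ht : t ≤ G.TS.card := by omega
    apply key t
    · refine ⟨ht, (tt_K_iff hcomp hG hGl hGr ht).mpr ⟨bl, ar, ?_, ?_, ?_, ?_, ?_, ?_⟩⟩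
      · exact (hAl bl).mpr ⟨halbl, le_rfl, hpbl⟩
      · exact (hAr ar).mpr ⟨le_rfl, harbr, rfl⟩
      all_goals omega
    · intro k hk hgk
      obtain ⟨i, j, hi, hj, h1, h2, h3, h4⟩ := (tt_K_iff hcomp hG hGl hGr hk).mp hgk
      have hi' := (hAl i).mp hi
      have hj' := (hAr j).mp hj
      omega
  · -- overlap case
    intro hc1 hc2
    set t := ((al : ℤ) - (ar : ℤ)).natAbs % 2 with htdef
    have hts : t = (al + ar) % 2 := by omega
    apply key t
    · have ht : t ≤ G.TS.card := by omega
      refine ⟨ht, ?_⟩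
      rcases le_or_gt ar al with hle | hlt
      · refine (tt_K_iff hcomp hG hGl hGr ht).mpr ⟨al, al - t, ?_, ?_, ?_, ?_, ?_, ?_⟩
        · exact (hAl al).mpr ⟨le_rfl, halbl, rfl⟩
        · exact (hAr (al - t)).mpr ⟨by omega, by omega, by omega⟩
        all_goals omega
      · refine (tt_K_iff hcomp hG hGl hGr ht).mpr ⟨ar - t, ar, ?_, ?_, ?_, ?_, ?_, ?_⟩
        · exact (hAl (ar - t)).mpr ⟨by omega, by omega, by omega⟩
        · exact (hAr ar).mpr ⟨le_rfl, harbr, rfl⟩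
        all_goals omega
    · intro k hk hgk
      obtain ⟨i, j, hi, hj, h1, h2, h3, h4⟩ := (tt_K_iff hcomp hG hGl hGr hk).mp hgk
      have hi' := (hAl i).mp hi
      have hj' := (hAr j).mp hj
      omega
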